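/- Let (R_i, t_i) be a perfectoid tower arising from (R_0, I_0) equipped with a system of perfectoid pillars (I_i), and let π_i : R_i/I_0R_i → R_i/I_iR_i be the natural projections. Then for every i ≥ 0 there exists a unique ring isomorphism F'_i : R_{i+1}/I_{i+1}R_{i+1} → R_i/I_iR_i such that π_i ∘ F_i = F'_i ∘ π_{i+1}. -/
import Mathlib


set_option synthInstance.maxHeartbeats 1000000
set_option maxHeartbeats 1000000
universe u

namespace PaperTower

variable {R : ℕ → Type u} [∀ i, CommRing (R i)]

/-- The set of `J`-torsion elements of a commutative ring. -/
def torSet {A : Type*} [CommRing A] (J : Ideal A) : Set A :=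
  {x | ∀ a ∈ J, ∃ n : ℕ, 0 < n ∧ a ^ n * x = 0}

/-- Cast ring homomorphism between quotients at equal indices. -/
def qcast (I : ∀ i, Ideal (R i)) {m n : ℕ} (h : m = n) :
    (R m ⧸ I m) →+* (R n ⧸ I n) := by subst h; exact RingHom.id _

/-- The `j`-th small tilt (inverse quasi-perfection) of a tower, as a subring of the
product of the quotients, consisting of sequences compatible with the Frobenius
projections `F`. -/
def Tilt (I : ∀ i, Ideal (R i))
    (F : ∀ i, (R (i + 1) ⧸ I (i + 1)) →+* (R i ⧸ I i)) (j : ℕ) :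
    Subring (∀ i, R (j + i) ⧸ I (j + i)) where
  carrier := {a | ∀ i, F (j + i) (a (i + 1)) = a i}
  zero_mem' := by
    intro i
    show F (j + i) 0 = 0
    simp
  one_mem' := by
    intro i
    show F (j + i) 1 = 1
    simp
  add_mem' := by
    intro a b ha hb i
    show F (j + i) (a (i + 1) + b (i + 1)) = a i + b i
    rw [map_add, ha i, hb i]
  mul_mem' := by
    intro a b ha hb i
    show F (j + i) (a (i + 1) * b (i + 1)) = a i * b i
    rw [map_mul, ha i, hb i]
  neg_mem' := by
    intro a ha i
    show F (j + i) (-(a (i + 1))) = -(a i)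
    rw [map_neg, ha i]

/-- The `m`-th projection `Φ^{(j)}_m` from the `j`-th small tilt. -/
def proj (I : ∀ i, Ideal (R i))
    (F : ∀ i, (R (i + 1) ⧸ I (i + 1)) →+* (R i ⧸ I i)) (j m : ℕ) :
    Tilt I F j →+* (R (j + m) ⧸ I (j + m)) :=
  (Pi.evalRingHom _ m).comp (Tilt I F j).subtype

/-- For a perfectoid tower with a system of perfectoid pillars `(I_i)`,
for every `i` there is a unique ring isomorphism
`F'_i : R_{i+1}/I_{i+1}R_{i+1} ≅ R_i/I_iR_i` with `π_i ∘ F_i = F'_i ∘ π_{i+1}`, where the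
quotients are realized as quotients of `R_i/I₀R_i` by the image of `I_i`. -/
theorem stmt13 (p : ℕ) (hp : p.Prime)
    (R : ℕ → Type u) [∀ i, CommRing (R i)]
    (t : ∀ i, R i →+* R (i + 1))
    (I : ∀ i, Ideal (R i))
    (hpI : (p : R 0) ∈ I 0)
    (hIsucc : ∀ i, I (i + 1) = (I i).map (t i))
    (tbar : ∀ i, (R i ⧸ I i) →+* (R (i + 1) ⧸ I (i + 1)))
    (htbar : ∀ i (x : R i),
      tbar i (Ideal.Quotient.mk (I i) x) = Ideal.Quotient.mk (I (i + 1)) (t i x))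
    (htbarInj : ∀ i, Function.Injective (tbar i))
    (F : ∀ i, (R (i + 1) ⧸ I (i + 1)) →+* (R i ⧸ I i))
    (hF : ∀ i (x : R (i + 1) ⧸ I (i + 1)), tbar i (F i x) = x ^ p)
    (hFsurj : ∀ i, Function.Surjective (F i))
    (hJac : ∀ i, I i ≤ (⊥ : Ideal (R i)).jacobson)
    (hI0prin : (I 0).IsPrincipal)
    (I1e : ∀ i, Ideal (R (i + 1)))
    (hI1prin : (I1e 0).IsPrincipal)
    (hI1pow : I1e 0 ^ p = I 1)
    (hI1es : ∀ i, I1e (i + 1) = (I1e i).map (t (i + 1)))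
    (hkerF : ∀ i, RingHom.ker (F i) = (I1e i).map (Ideal.Quotient.mk (I (i + 1))))
    (htorz : ∀ i, ∀ a ∈ I i, ∀ x ∈ torSet (I i), a * x = 0)
    (hFtor : ∀ i, ∃ G : torSet (I (i + 1)) → torSet (I i), Function.Bijective G ∧
      ∀ x : torSet (I (i + 1)),
        Ideal.Quotient.mk (I i) (G x : R i) = F i (Ideal.Quotient.mk (I (i + 1)) (x : R (i + 1))))
    (Ipill : ∀ i, Ideal (R i))
    (hpill0 : Ipill 0 = I 0) (hpill1 : Ipill 1 = I1e 0)
    (hpillPrin : ∀ i, (Ipill i).IsPrincipal)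
    (hpill : ∀ i, Ideal.comap (F i) ((Ipill i).map (Ideal.Quotient.mk (I i)))
        = (Ipill (i + 1)).map (Ideal.Quotient.mk (I (i + 1))))
    (i : ℕ) :
    ∃! F' : ((R (i + 1) ⧸ I (i + 1)) ⧸ (Ipill (i + 1)).map (Ideal.Quotient.mk (I (i + 1))))
        ≃+* ((R i ⧸ I i) ⧸ (Ipill i).map (Ideal.Quotient.mk (I i))),
      ∀ x : R (i + 1) ⧸ I (i + 1),
        Ideal.Quotient.mk ((Ipill i).map (Ideal.Quotient.mk (I i))) (F i x)
          = F' (Ideal.Quotient.mk ((Ipill (i + 1)).map (Ideal.Quotient.mk (I (i + 1)))) x) := by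
  set J := (Ipill i).map (Ideal.Quotient.mk (I i))
  set J' := (Ipill (i + 1)).map (Ideal.Quotient.mk (I (i + 1)))
  set g : (R (i + 1) ⧸ I (i + 1)) →+* (R i ⧸ I i) ⧸ J :=
    (Ideal.Quotient.mk J).comp (F i) with hg
  have hker : RingHom.ker g = J' := by
    rw [hg, ← RingHom.comap_ker, Ideal.mk_ker, hpill i]
  have hgsurj : Function.Surjective g :=
    (Ideal.Quotient.mk_surjective).comp (hFsurj i)
  let e1 : ((R (i + 1) ⧸ I (i + 1)) ⧸ J') ≃+* ((R (i + 1) ⧸ I (i + 1)) ⧸ RingHom.ker g) :=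
    Ideal.quotEquivOfEq hker.symm
  let e2 := RingHom.quotientKerEquivOfSurjective hgsurj
  refine ⟨e1.trans e2, ?_, ?_⟩
  · intro x
    rw [RingEquiv.trans_apply]
    simp only [e1, e2, Ideal.quotEquivOfEq_mk]
    exact (RingHom.kerLift_mk g x).symm
  · intro F'' hF''
    ext y
    obtain ⟨x, rfl⟩ := Ideal.Quotient.mk_surjective y
    rw [← hF'' x]
    rw [RingEquiv.trans_apply]
    simp only [e1, e2, Ideal.quotEquivOfEq_mk]
    exact (RingHom.kerLift_mk g x).symm

end PaperTower
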